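/- Let H be a finite group, N ⊴ H a normal subgroup, and let ρ, ρ′ be finite-dimensional irreducible representations of H over an algebraically closed field k such that the restrictions ρ|_N and ρ′|_N are isomorphic and irreducible as N-representations. Then there exists a one-dimensional character χ of H, trivial on N, with ρ′ ≅ ρ ⊗ χ. -/
import Mathlib


lemma schur_aux9 {k V : Type*} [Field k] [IsAlgClosed k] [AddCommGroup V] [Module k V]
    [FiniteDimensional k V] [Nontrivial V] {H : Type*} [Group H] (N : Subgroup H)
    (ρ : Representation k H V)
    (hirrN : ∀ W : Submodule k V, (∀ g ∈ N, ∀ v ∈ W, ρ g v ∈ W) → W = ⊥ ∨ W = ⊤)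
    (f : V →ₗ[k] V) (hf : ∀ g ∈ N, ∀ v, f (ρ g v) = ρ g (f v)) :
    ∃ c : k, ∀ v, f v = c • v := by
  obtain ⟨c, hc⟩ := Module.End.exists_eigenvalue f
  refine ⟨c, ?_⟩
  have hinv : ∀ g ∈ N, ∀ v ∈ Module.End.eigenspace f c, ρ g v ∈ Module.End.eigenspace f c := by
    intro g hg v hv
    rw [Module.End.mem_eigenspace_iff] at hv ⊢
    rw [hf g hg, hv, map_smul]
  rcases hirrN _ hinv with h | h
  · exact absurd h hc
  · intro v
    have : v ∈ Module.End.eigenspace f c := h ▸ Submodule.mem_top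
    rwa [Module.End.mem_eigenspace_iff] at this

/-- Let `H` be a finite group, `N ⊴ H`, and let `ρ, ρ'` be
finite-dimensional irreducible representations of `H` over an algebraically closed field `k`
whose restrictions to `N` are isomorphic and irreducible.  Then there is a character
`χ : H →* kˣ`, trivial on `N`, with `ρ' ≅ ρ ⊗ χ`. -/
theorem stmt_9 {k : Type*} [Field k] [IsAlgClosed k]
    {H : Type*} [Group H] [Finite H] (N : Subgroup H) [N.Normal]
    {V V' : Type*} [AddCommGroup V] [Module k V] [AddCommGroup V'] [Module k V']
    [FiniteDimensional k V] [FiniteDimensional k V']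
    (ρ : Representation k H V) (ρ' : Representation k H V')
    (hirr : Nontrivial V ∧
      ∀ W : Submodule k V, (∀ (g : H), ∀ v ∈ W, ρ g v ∈ W) → W = ⊥ ∨ W = ⊤)
    (hirr' : Nontrivial V' ∧
      ∀ W : Submodule k V', (∀ (g : H), ∀ v ∈ W, ρ' g v ∈ W) → W = ⊥ ∨ W = ⊤)
    (hirrN : ∀ W : Submodule k V, (∀ g ∈ N, ∀ v ∈ W, ρ g v ∈ W) → W = ⊥ ∨ W = ⊤)
    (hirrN' : ∀ W : Submodule k V', (∀ g ∈ N, ∀ v ∈ W, ρ' g v ∈ W) → W = ⊥ ∨ W = ⊤)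
    (hres : ∃ e : V ≃ₗ[k] V', ∀ g ∈ N, ∀ v : V, e (ρ g v) = ρ' g (e v)) :
    ∃ χ : H →* kˣ, (∀ g ∈ N, χ g = 1) ∧
      ∃ e : V ≃ₗ[k] V', ∀ (g : H) (v : V), e (ρ g v) = (χ g : k) • ρ' g (e v) := by
  obtain ⟨e, he⟩ := hres
  have hV : Nontrivial V := hirr.1
  -- e.symm intertwines on N
  have hesymm : ∀ g ∈ N, ∀ w : V', e.symm (ρ' g w) = ρ g (e.symm w) := by
    intro g hg w
    apply e.injective
    rw [e.apply_symm_apply, he g hg, e.apply_symm_apply]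
  have key : ∀ g : H, ∃ c : k, ∀ v, e (ρ g v) = c • ρ' g (e v) := by
    intro g
    set f : V →ₗ[k] V :=
      e.symm.toLinearMap ∘ₗ (ρ' g⁻¹ : V' →ₗ[k] V') ∘ₗ e.toLinearMap ∘ₗ (ρ g : V →ₗ[k] V)
      with hfdef
    have hf : ∀ n ∈ N, ∀ v, f (ρ n v) = ρ n (f v) := by
      intro n hn v
      have hmem : g * n * g⁻¹ ∈ N := Subgroup.Normal.conj_mem ‹N.Normal› n hn g
      simp only [hfdef, LinearMap.comp_apply, LinearEquiv.coe_coe]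
      have h1 : ρ g (ρ n v) = ρ (g * n * g⁻¹) (ρ g v) := by
        rw [← Module.End.mul_apply, ← map_mul, ← Module.End.mul_apply, ← map_mul]
        group
      rw [h1, he _ hmem, ← Module.End.mul_apply, ← map_mul]
      have h2 : g⁻¹ * (g * n * g⁻¹) = n * g⁻¹ := by group
      rw [h2, map_mul, Module.End.mul_apply, hesymm n hn]
    obtain ⟨c, hc⟩ := schur_aux9 N ρ hirrN f hf
    refine ⟨c, fun v => ?_⟩
    have := hc v
    simp only [hfdef, LinearMap.comp_apply, LinearEquiv.coe_coe] at this
    have h3 : ρ' g⁻¹ (e (ρ g v)) = c • e v := by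
      apply e.symm.injective
      rw [this, map_smul, e.symm_apply_apply]
    have h4 := congrArg (ρ' g) h3
    rwa [← Module.End.mul_apply, ← map_mul, mul_inv_cancel, map_one, Module.End.one_apply,
      map_smul] at h4
  choose c hc using key
  obtain ⟨v₀, hv₀⟩ := exists_ne (0 : V)
  have hρ'inj : ∀ g : H, Function.Injective (ρ' g) := by
    intro g x y hxy
    have h := congrArg (ρ' g⁻¹) hxy
    rw [← Module.End.mul_apply, ← Module.End.mul_apply, ← map_mul, inv_mul_cancel, map_one] at h
    simpa using h
  have hρinj : ∀ g : H, Function.Injective (ρ g) := by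
    intro g x y hxy
    have h := congrArg (ρ g⁻¹) hxy
    rw [← Module.End.mul_apply, ← Module.End.mul_apply, ← map_mul, inv_mul_cancel, map_one] at h
    simpa using h
  have hne0 : ∀ g : H, ρ' g (e v₀) ≠ 0 := by
    intro g h
    exact hv₀ (e.injective (hρ'inj g (by simpa using h) : e v₀ = e 0) ▸ rfl)
  have hcne : ∀ g : H, c g ≠ 0 := by
    intro g hg0
    have := hc g v₀
    rw [hg0, zero_smul] at this
    exact hv₀ (hρinj g (e.injective (by simpa using this) : ρ g v₀ = ρ g 0) ▸ rfl)
  have hscal : ∀ g : H, ∀ a b : k, a • ρ' g (e v₀) = b • ρ' g (e v₀) → a = b := by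
    intro g a b hab
    have : (a - b) • ρ' g (e v₀) = 0 := by rw [sub_smul, hab, sub_self]
    rcases smul_eq_zero.mp this with h | h
    · exact sub_eq_zero.mp h
    · exact absurd h (hne0 g)
  have hmul : ∀ g h : H, c (g * h) = c g * c h := by
    intro g h
    have h1 : e (ρ (g * h) v₀) = c (g * h) • ρ' (g * h) (e v₀) := hc _ _
    have h2 : e (ρ (g * h) v₀) = (c g * c h) • ρ' (g * h) (e v₀) := by
      rw [map_mul, Module.End.mul_apply, hc g, hc h, map_smul, map_mul, Module.End.mul_apply,
        mul_smul]
    exact hscal (g * h) _ _ (h1.symm.trans h2)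
  have hN1 : ∀ g ∈ N, c g = 1 := by
    intro g hg
    have h1 : e (ρ g v₀) = c g • ρ' g (e v₀) := hc g v₀
    have h2 : e (ρ g v₀) = (1 : k) • ρ' g (e v₀) := by rw [one_smul]; exact he g hg v₀
    exact hscal g _ _ (h1.symm.trans h2)
  refine ⟨MonoidHom.mk' (fun g => Units.mk0 (c g) (hcne g))
      (fun g h => Units.ext (by simpa using hmul g h)), ?_, e, ?_⟩
  · intro g hg
    exact Units.ext (by simpa using hN1 g hg)
  · intro g v
    simpa using hc g v
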